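/- Let f : ℂ² → ℂ² near the origin be given in coordinates (τ, η) by f(τ, η) = ( ((η² + (τ−1)²)/(1+η²))², τ²η²/(1+η²)² ). Then the Jacobian determinant of f satisfies det Df(τ,η) = η·τ²·h(τ,η) for some function h holomorphic near (0,0) with h(0,0) ≠ 0; in particular |det Df| ≍ |η||τ|² near the origin. -/

import Mathlib

/-- Jacobian determinant (via partial derivatives) of
`f(τ,η) = ( ((η² + (τ−1)²)/(1+η²))², τ²η²/(1+η²)² )`. -/
noncomputable def jacf (p : ℂ × ℂ) : ℂ :=
  deriv (fun τ => ((p.2 ^ 2 + (τ - 1) ^ 2) / (1 + p.2 ^ 2)) ^ 2) p.1 *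
      deriv (fun η => p.1 ^ 2 * η ^ 2 / (1 + η ^ 2) ^ 2) p.2 -
    deriv (fun η => ((η ^ 2 + (p.1 - 1) ^ 2) / (1 + η ^ 2)) ^ 2) p.2 *
      deriv (fun τ => τ ^ 2 * p.2 ^ 2 / (1 + p.2 ^ 2) ^ 2) p.1

noncomputable def hfun (p : ℂ × ℂ) : ℂ :=
  8 * (p.2 ^ 2 + (p.1 - 1) ^ 2) * (p.1 - 1 - p.2 ^ 2) / (1 + p.2 ^ 2) ^ 5

lemma jacf_eq (p : ℂ × ℂ) (hb : (1 : ℂ) + p.2 ^ 2 ≠ 0) :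
    jacf p = p.2 * p.1 ^ 2 * hfun p := by
  obtain ⟨a, b⟩ := p
  simp only at hb
  have hb2 : ((1 : ℂ) + b ^ 2) ^ 2 ≠ 0 := pow_ne_zero _ hb
  -- derivative 1
  have h1 : HasDerivAt (fun τ : ℂ => ((b ^ 2 + (τ - 1) ^ 2) / (1 + b ^ 2)) ^ 2)
      ((2 : ℕ) * ((b ^ 2 + (a - 1) ^ 2) / (1 + b ^ 2)) ^ (2 - 1)
        * ((2 : ℕ) * (a - 1) ^ (2 - 1) * 1 / (1 + b ^ 2))) a := by
    exact (((((hasDerivAt_id a).sub_const 1).pow 2).const_add (b ^ 2)).div_const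
      (1 + b ^ 2)).pow 2
  -- derivative 2
  have h2 : HasDerivAt (fun η : ℂ => a ^ 2 * η ^ 2 / (1 + η ^ 2) ^ 2)
      (((a ^ 2 * ((2 : ℕ) * b ^ (2 - 1))) * (1 + b ^ 2) ^ 2 -
        a ^ 2 * b ^ 2 * ((2 : ℕ) * (1 + b ^ 2) ^ (2 - 1) * ((2 : ℕ) * b ^ (2 - 1)))) /
        ((1 + b ^ 2) ^ 2) ^ 2) b := by
    exact HasDerivAt.div ((hasDerivAt_pow 2 b).const_mul (a ^ 2))
      (((hasDerivAt_pow 2 b).const_add 1).pow 2) hb2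
  -- derivative 3
  have h3 : HasDerivAt (fun η : ℂ => ((η ^ 2 + (a - 1) ^ 2) / (1 + η ^ 2)) ^ 2)
      ((2 : ℕ) * ((b ^ 2 + (a - 1) ^ 2) / (1 + b ^ 2)) ^ (2 - 1) *
        ((((2 : ℕ) * b ^ (2 - 1)) * (1 + b ^ 2) -
          (b ^ 2 + (a - 1) ^ 2) * ((2 : ℕ) * b ^ (2 - 1))) / (1 + b ^ 2) ^ 2)) b := by
    exact (HasDerivAt.div ((hasDerivAt_pow 2 b).add_const ((a - 1) ^ 2))
      ((hasDerivAt_pow 2 b).const_add 1) hb).pow 2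
  -- derivative 4
  have h4 : HasDerivAt (fun τ : ℂ => τ ^ 2 * b ^ 2 / (1 + b ^ 2) ^ 2)
      (((2 : ℕ) * a ^ (2 - 1) * b ^ 2) / (1 + b ^ 2) ^ 2) a := by
    exact ((hasDerivAt_pow 2 a).mul_const (b ^ 2)).div_const ((1 + b ^ 2) ^ 2)
  simp only [jacf, hfun, h1.deriv, h2.deriv, h3.deriv, h4.deriv]
  push_cast
  field_simp
  ring

theorem stmt_15 :
    ∃ h : ℂ × ℂ → ℂ, AnalyticAt ℂ h 0 ∧ h 0 ≠ 0 ∧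
      (∀ᶠ p : ℂ × ℂ in nhds 0, jacf p = p.2 * p.1 ^ 2 * h p) ∧
      ∃ c C : ℝ, 0 < c ∧ 0 < C ∧
        ∀ᶠ p : ℂ × ℂ in nhds 0,
          c * (‖p.2‖ * ‖p.1‖ ^ 2) ≤ ‖jacf p‖ ∧
          ‖jacf p‖ ≤ C * (‖p.2‖ * ‖p.1‖ ^ 2) := by
  have hden : ((1 : ℂ) + (0 : ℂ × ℂ).2 ^ 2) ^ 5 ≠ 0 := by norm_num
  have hnum : AnalyticAt ℂ
      (fun p : ℂ × ℂ => 8 * (p.2 ^ 2 + (p.1 - 1) ^ 2) * (p.1 - 1 - p.2 ^ 2)) 0 :=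
    ((analyticAt_const.mul ((analyticAt_snd.pow 2).add
      ((analyticAt_fst.sub analyticAt_const).pow 2))).mul
      ((analyticAt_fst.sub analyticAt_const).sub (analyticAt_snd.pow 2)))
  have hdenA : AnalyticAt ℂ (fun p : ℂ × ℂ => ((1 : ℂ) + p.2 ^ 2) ^ 5) 0 :=
    (analyticAt_const.add (analyticAt_snd.pow 2)).pow 5
  have hA : AnalyticAt ℂ hfun 0 := hnum.div hdenA hden
  have h0 : hfun 0 = -8 := by
    simp [hfun]
  have h0ne : hfun 0 ≠ 0 := by rw [h0]; norm_num
  have hScont : ContinuousAt (fun p : ℂ × ℂ => (1 : ℂ) + p.2 ^ 2) 0 := by fun_prop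
  have hS : ∀ᶠ p : ℂ × ℂ in nhds 0, (1 : ℂ) + p.2 ^ 2 ≠ 0 :=
    hScont.eventually_ne (by norm_num)
  have heq : ∀ᶠ p : ℂ × ℂ in nhds 0, jacf p = p.2 * p.1 ^ 2 * hfun p :=
    hS.mono fun p hp => jacf_eq p hp
  refine ⟨hfun, hA, h0ne, heq, 4, 12, by norm_num, by norm_num, ?_⟩
  have habs : ContinuousAt (fun p : ℂ × ℂ => ‖hfun p‖) 0 :=
    continuous_norm.continuousAt.comp hA.continuousAt
  have hmem : ∀ᶠ p : ℂ × ℂ in nhds 0, ‖hfun p‖ ∈ Set.Ioo (4 : ℝ) 12 := by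
    apply habs.eventually_mem
    apply isOpen_Ioo.mem_nhds
    simp [h0]
    norm_num
  filter_upwards [heq, hmem] with p hp hm
  rw [hp]
  have hnn : 0 ≤ ‖p.2‖ * ‖p.1‖ ^ 2 := by positivity
  rw [norm_mul, norm_mul, norm_pow]
  constructor
  · nlinarith [hm.1, hm.2]
  · nlinarith [hm.1, hm.2]
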